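/- Let t ≥ 2, δ ≥ 14, and let H be a 3-uniform hypergraph on n vertices with no trace of K_{2,t}. Let C_δ be the set of edges e of H such that every pair of vertices contained in e has co-degree strictly greater than δ in H. Set ε = (1 + log(δ+1))/(δ+1). Then for every pair of distinct vertices {x,y}, the number of edges of C_δ containing both x and y is at most (1 + 4ε)·t − 1. -/

import Mathlib

open Finset

/-- The co-degree of `x` and `y` in `H`: the number of edges containing both. -/
def codeg {V : Type*} [DecidableEq V] (H : Finset (Finset V)) (x y : V) : ℕ :=
  (H.filter fun e => x ∈ e ∧ y ∈ e).card

/-- A 3-uniform hypergraph `H` contains `K_{2,t}` as a trace. -/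
def ContainsTraceK2t {V : Type*} [DecidableEq V] (H : Finset (Finset V)) (t : ℕ) : Prop :=
  ∃ (x y : V) (D : Finset V) (f g : V → Finset V), x ≠ y ∧ x ∉ D ∧ y ∉ D ∧ D.card = t ∧
    ∀ u ∈ D, f u ∈ H ∧ g u ∈ H ∧
      f u ∩ (insert x (insert y D)) = {x, u} ∧
      g u ∩ (insert x (insert y D)) = {y, u}

private lemma aux_third {V : Type*} [DecidableEq V] {e : Finset V} {x y : V}
    (h3 : e.card = 3) (hx : x ∈ e) (hy : y ∈ e) (hxy : x ≠ y) :
    ∃ u, u ≠ x ∧ u ≠ y ∧ (e.erase x).erase y = {u} ∧ e = insert x (insert y {u}) := by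
  have hy' : y ∈ e.erase x := mem_erase.mpr ⟨hxy.symm, hy⟩
  have h1 : ((e.erase x).erase y).card = 1 := by
    rw [card_erase_of_mem hy', card_erase_of_mem hx, h3]
  obtain ⟨u, hu⟩ := card_eq_one.mp h1
  have hue : u ∈ (e.erase x).erase y := hu ▸ mem_singleton_self u
  have h2 := mem_erase.mp hue
  have h3' := mem_erase.mp h2.2
  refine ⟨u, h3'.1, h2.1, hu, ?_⟩
  rw [← hu, insert_erase hy', insert_erase hx]

private lemma auxW_mem {V : Type*} [DecidableEq V] {H : Finset (Finset V)}
    (h3 : ∀ e ∈ H, e.card = 3) (x u z w : V) (hxu : x ≠ u)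
    (hw : w ∈ ((H.filter fun e => x ∈ e ∧ u ∈ e).biUnion fun e => (e.erase x).erase u).erase z) :
    w ≠ z ∧ w ≠ x ∧ w ≠ u ∧ insert x (insert u {w}) ∈ H := by
  obtain ⟨hwz, hw'⟩ := mem_erase.mp hw
  obtain ⟨e, he, hwe⟩ := mem_biUnion.mp hw'
  have hmf := mem_filter.mp he
  obtain ⟨w', hw'x, hw'u, hsing, hedef⟩ := aux_third (h3 e hmf.1) hmf.2.1 hmf.2.2 hxu
  rw [hsing, mem_singleton] at hwe
  subst hwe
  exact ⟨hwz, hw'x, hw'u, hedef ▸ hmf.1⟩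

private lemma auxW_card {V : Type*} [DecidableEq V] {H : Finset (Finset V)}
    (h3 : ∀ e ∈ H, e.card = 3) (x u z : V) (hxu : x ≠ u) :
    codeg H x u ≤
      (((H.filter fun e => x ∈ e ∧ u ∈ e).biUnion fun e => (e.erase x).erase u).erase z).card + 1 := by
  classical
  set F' := H.filter fun e => x ∈ e ∧ u ∈ e with hF'
  have hkey : ∀ e ∈ F', ∃ w, w ≠ x ∧ w ≠ u ∧ (e.erase x).erase u = {w} ∧
      e = insert x (insert u {w}) := by
    intro e he
    have h := mem_filter.mp he
    exact aux_third (h3 e h.1) h.2.1 h.2.2 hxu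
  have hdisj : ∀ e₁ ∈ F', ∀ e₂ ∈ F', e₁ ≠ e₂ →
      Disjoint ((e₁.erase x).erase u) ((e₂.erase x).erase u) := by
    intro e₁ h₁ e₂ h₂ hne
    obtain ⟨w₁, _, _, hs₁, hd₁⟩ := hkey e₁ h₁
    obtain ⟨w₂, _, _, hs₂, hd₂⟩ := hkey e₂ h₂
    rw [hs₁, hs₂, disjoint_singleton]
    rintro rfl
    exact hne (hd₁.trans hd₂.symm)
  have hcard : (F'.biUnion fun e => (e.erase x).erase u).card = F'.card := by
    rw [card_biUnion hdisj, Finset.card_eq_sum_ones F']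
    apply Finset.sum_congr rfl
    intro e he
    obtain ⟨w, _, _, hs, _⟩ := hkey e he
    rw [hs, card_singleton]
  have h2 := Finset.pred_card_le_card_erase
    (s := F'.biUnion fun e => (e.erase x).erase u) (a := z)
  have h4 : codeg H x u = F'.card := rfl
  omega

private lemma aux_desc : ∀ (a s m : ℕ), s ≤ m →
    s.descFactorial a * m ^ a ≤ m.descFactorial a * s ^ a := by
  intro a
  induction a with
  | zero => intro s m _; simp
  | succ n ih =>
    intro s m h
    rw [Nat.descFactorial_succ, Nat.descFactorial_succ, pow_succ, pow_succ]
    have h1 : (s - n) * m ≤ (m - n) * s := by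
      rw [Nat.sub_mul, Nat.sub_mul, mul_comm s m]
      exact Nat.sub_le_sub_left (Nat.mul_le_mul_left n h) (m * s)
    have h2 := ih s m h
    calc (s - n) * s.descFactorial n * (m ^ n * m)
        = ((s - n) * m) * (s.descFactorial n * m ^ n) := by ring
      _ ≤ ((m - n) * s) * (m.descFactorial n * s ^ n) := Nat.mul_le_mul h1 h2
      _ = (m - n) * m.descFactorial n * (s ^ n * s) := by ring

private lemma aux_choose_pow (a s m : ℕ) (h : s ≤ m) :
    s.choose a * m ^ a ≤ m.choose a * s ^ a := by
  apply Nat.le_of_mul_le_mul_left _ (Nat.factorial_pos a)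
  calc a.factorial * (s.choose a * m ^ a)
      = s.descFactorial a * m ^ a := by
        rw [Nat.descFactorial_eq_factorial_mul_choose]; ring
    _ ≤ m.descFactorial a * s ^ a := aux_desc a s m h
    _ = a.factorial * (m.choose a * s ^ a) := by
        rw [Nat.descFactorial_eq_factorial_mul_choose]; ring

private lemma aux_choose_id (a s m : ℕ) (h1 : a ≤ s) (h2 : s ≤ m) :
    m.choose s * s.choose a = m.choose a * ((m - a).choose (s - a)) := by
  have hsa : s - a ≤ m - a := Nat.sub_le_sub_right h2 a
  have hms : m - a - (s - a) = m - s := by omega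
  apply Nat.eq_of_mul_eq_mul_right
    (show 0 < a.factorial * ((s - a).factorial * (m - s).factorial) by positivity)
  calc m.choose s * s.choose a * (a.factorial * ((s - a).factorial * (m - s).factorial))
      = (s.choose a * a.factorial * (s - a).factorial) * (m.choose s * (m - s).factorial) := by
        ring
    _ = s.factorial * (m.choose s * (m - s).factorial) := by
        rw [Nat.choose_mul_factorial_mul_factorial h1]
    _ = m.choose s * s.factorial * (m - s).factorial := by ring
    _ = m.factorial := Nat.choose_mul_factorial_mul_factorial h2
    _ = m.choose a * a.factorial * (m - a).factorial :=
        (Nat.choose_mul_factorial_mul_factorial (h1.trans h2)).symm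
    _ = m.choose a * a.factorial *
        ((m - a).choose (s - a) * (s - a).factorial * (m - a - (s - a)).factorial) := by
        rw [Nat.choose_mul_factorial_mul_factorial hsa]
    _ = m.choose a * ((m - a).choose (s - a)) *
        (a.factorial * ((s - a).factorial * (m - s).factorial)) := by
        rw [hms]; ring

private lemma aux_eps_le {y : ℝ} (hy : 15 ≤ y) : (1 + Real.log y) / y ≤ 13 / 50 := by
  have h0 : (0:ℝ) < y := by linarith
  have hlog15 : Real.log 15 ≤ 29 / 10 := by
    rw [Real.log_le_iff_le_exp (by norm_num)]
    have h1 : (2.7182818283 : ℝ) < Real.exp 1 := Real.exp_one_gt_d9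
    have h045 : (1.45 : ℝ) ≤ Real.exp 0.45 := by
      have := Real.add_one_le_exp (0.45 : ℝ); linarith
    have he : Real.exp (29 / 10) = Real.exp 1 * Real.exp 1 * Real.exp 0.45 * Real.exp 0.45 := by
      rw [← Real.exp_add, ← Real.exp_add, ← Real.exp_add]; norm_num
    have p1 : (7.389 : ℝ) ≤ Real.exp 1 * Real.exp 1 := by nlinarith
    have p2 : (2.1025 : ℝ) ≤ Real.exp 0.45 * Real.exp 0.45 := by
      nlinarith [Real.exp_pos (0.45:ℝ)]
    rw [he]
    nlinarith [Real.exp_pos 1, Real.exp_pos (0.45 : ℝ)]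
  have htangent : Real.log y ≤ Real.log 15 + (y / 15 - 1) := by
    have h15 : Real.log (y / 15) ≤ y / 15 - 1 :=
      Real.log_le_sub_one_of_pos (by linarith)
    rw [Real.log_div (by linarith) (by norm_num)] at h15
    linarith
  rw [div_le_iff₀ h0]
  nlinarith

set_option maxHeartbeats 2000000 in
private lemma aux_analytic (δ L ε tR sR mR kR : ℝ) (d : ℕ) (hδ : 14 ≤ δ)
    (hL : L = Real.log (δ+1)) (hε : ε = (1 + L)/(δ+1))
    (hd1 : (d:ℝ) ≤ δ) (hd2 : δ ≤ (d:ℝ) + 1)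
    (htd : (d:ℝ) + 1 ≤ tR)
    (hk1 : ε * tR ≤ kR)
    (hk2 : kR ≤ ε * tR + 1)
    (hs : sR = tR + kR)
    (hm : (1 + 4*ε) * tR - 1 ≤ mR) :
    sR ≤ mR ∧ 2 * mR * sR ^ (d+1) ≤ kR * mR ^ (d+1) := by
  have hδ1 : (0:ℝ) < δ + 1 := by linarith
  have hL2 : 2 ≤ L := by
    rw [hL, Real.le_log_iff_exp_le hδ1]
    have h1 : Real.exp 1 < 2.7182818286 := Real.exp_one_lt_d9
    have h2 : Real.exp 2 = Real.exp 1 * Real.exp 1 := by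
      rw [← Real.exp_add]; norm_num
    nlinarith [Real.exp_pos 1]
  have hεδ : ε * (δ+1) = 1 + L := by rw [hε]; field_simp
  have hεpos : 0 < ε := by rw [hε]; exact div_pos (by linarith) hδ1
  have hεle : ε ≤ 13/50 := by rw [hε, hL]; exact aux_eps_le (by linarith)
  have htR14 : 14 ≤ tR := by linarith
  have htR0 : 0 ≤ tR := by linarith
  have hεt : 14/5 ≤ ε * tR := by
    have h1 : ε * δ ≤ ε * tR :=
      mul_le_mul_of_nonneg_left (by linarith) hεpos.le
    have h2 : ε * 15 ≤ 1 + L := by nlinarith [hεδ, hεpos]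
    nlinarith [hεδ, hL2, hεpos]
  have hεt1 : 1 ≤ (5/14) * (ε * tR) := by linarith
  have hs_le : sR ≤ (1 + (19/14)*ε)*tR := by
    rw [hs]; nlinarith [hk2, hεt1]
  have hm_ge : (1 + (51/14)*ε)*tR ≤ mR := by nlinarith [hm, hεt1]
  have hsm : sR ≤ mR := by nlinarith [mul_nonneg hεpos.le htR0]
  refine ⟨hsm, ?_⟩
  have hcε : (1600/1363) * ε ≤ 1/2 := by nlinarith [hεle, hεpos]
  have hcε0 : (0:ℝ) ≤ 1 - (1600/1363)*ε := by linarith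
  have hscalar : (1 + (19/14)*ε) ≤ (1 - (1600/1363)*ε)*(1 + (51/14)*ε) := by
    nlinarith [mul_nonneg (sub_nonneg.mpr hεle) hεpos.le]
  have hkey1 : sR ≤ (1 - (1600/1363)*ε)*mR := by
    have h2 : (1 + (19/14)*ε)*tR ≤ (1 - (1600/1363)*ε)*((1 + (51/14)*ε)*tR) := by
      rw [← mul_assoc]
      exact mul_le_mul_of_nonneg_right hscalar htR0
    have h3 : (1 - (1600/1363)*ε)*((1 + (51/14)*ε)*tR) ≤ (1 - (1600/1363)*ε)*mR :=
      mul_le_mul_of_nonneg_left hm_ge hcε0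
    linarith
  have hmpos : (0:ℝ) < mR := by nlinarith [mul_nonneg hεpos.le htR0]
  have hspos : (0:ℝ) ≤ sR := by rw [hs]; nlinarith [hεt]
  have hexpL : Real.exp L = δ + 1 := by rw [hL]; exact Real.exp_log hδ1
  have hb2 : sR ^ d ≤ Real.exp (-(1+L)) * mR ^ d := by
    have h1 : sR ^ d ≤ (1 - (1600/1363)*ε) ^ d * mR ^ d := by
      rw [← mul_pow]; exact pow_le_pow_left₀ hspos hkey1 d
    have h3 : (1 - (1600/1363)*ε) ^ d ≤ (Real.exp (-((1600/1363)*ε))) ^ d := by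
      apply pow_le_pow_left₀ hcε0
      nlinarith [Real.add_one_le_exp (-((1600/1363)*ε))]
    have h4 : (Real.exp (-((1600/1363)*ε))) ^ d = Real.exp (-((1600/1363)*ε) * d) := by
      rw [← Real.exp_nat_mul]; ring_nf
    have h5 : Real.exp (-((1600/1363)*ε) * d) ≤ Real.exp (-(1+L)) := by
      apply Real.exp_le_exp.mpr
      have hd15 : (13/15)*(δ+1) ≤ (d:ℝ) := by linarith
      have e1 : (1600/1363)*ε*((13/15)*(δ+1)) ≤ (1600/1363)*ε*d :=
        mul_le_mul_of_nonneg_left hd15 (by positivity)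
      have e2 : (1600/1363)*ε*((13/15)*(δ+1)) = ((13/15)*(1600/1363))*(ε * (δ+1)) := by
        ring
      rw [e2, hεδ] at e1
      nlinarith [hL2]
    calc sR ^ d ≤ (1 - (1600/1363)*ε) ^ d * mR ^ d := h1
      _ ≤ (Real.exp (-((1600/1363)*ε))) ^ d * mR ^ d :=
          mul_le_mul_of_nonneg_right h3 (by positivity)
      _ = Real.exp (-((1600/1363)*ε) * d) * mR ^ d := by rw [h4]
      _ ≤ Real.exp (-(1+L)) * mR ^ d :=
          mul_le_mul_of_nonneg_right h5 (by positivity)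
  have hcore : (947/350) * Real.exp (-(1+L)) ≤ ε := by
    have e1 : Real.exp (-(1+L)) = Real.exp (-1) * (Real.exp L)⁻¹ := by
      rw [← Real.exp_neg, ← Real.exp_add]; ring_nf
    have emul : Real.exp (-1) * Real.exp 1 = 1 := by
      rw [← Real.exp_add]; norm_num
    have e2 : Real.exp (-1) ≤ 1/2 := by
      nlinarith [emul, Real.exp_one_gt_d9, (Real.exp_pos (-1)).le]
    have hinvpos : (0:ℝ) < (δ+1)⁻¹ := by positivity
    have e3 : (947/350) * Real.exp (-1) ≤ 1 + L := by
      nlinarith [(Real.exp_pos (-1)).le]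
    rw [hε, e1, hexpL, div_eq_mul_inv]
    calc (947/350) * (Real.exp (-1) * (δ+1)⁻¹)
        = ((947/350) * Real.exp (-1)) * (δ+1)⁻¹ := by ring
      _ ≤ (1 + L) * (δ+1)⁻¹ := mul_le_mul_of_nonneg_right e3 hinvpos.le
  have hb1 : 2*sR ≤ (947/350)*tR := by nlinarith [hs_le, hεle, htR0]
  have hT1 : 2 * sR * sR ^ d ≤ kR * mR ^ d := by
    calc 2*sR*sR^d ≤ ((947/350)*tR) * (Real.exp (-(1+L)) * mR ^ d) := by
          apply mul_le_mul hb1 hb2 (by positivity) (by positivity)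
      _ = ((947/350) * Real.exp (-(1+L))) * tR * mR ^ d := by ring
      _ ≤ (ε * tR) * mR ^ d := by
          apply mul_le_mul_of_nonneg_right _ (by positivity : (0:ℝ) ≤ mR ^ d)
          exact mul_le_mul_of_nonneg_right hcore htR0
      _ ≤ kR * mR ^ d := mul_le_mul_of_nonneg_right hk1 (by positivity)
  calc 2 * mR * sR ^ (d+1) = mR * (2 * sR * sR ^ d) := by ring
    _ ≤ mR * (kR * mR ^ d) := mul_le_mul_of_nonneg_left hT1 hmpos.le
    _ = kR * mR ^ (d+1) := by ring

set_option maxHeartbeats 2000000 in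
/-- Let `t ≥ 2`, `δ ≥ 14`, `ε = (1 + log(δ+1))/(δ+1)`, and let `H` be a
3-uniform hypergraph with no `K_{2,t}` trace.  If `C` is the set of edges all of
whose pairs have co-degree greater than `δ` in `H`, then every pair of distinct
vertices lies in at most `(1 + 4ε)t - 1` edges of `C`. -/
theorem stmt19 {V : Type*} [DecidableEq V] (t : ℕ) (ht : 2 ≤ t)
    (δ : ℝ) (hδ : 14 ≤ δ)
    (H : Finset (Finset V)) (h3 : ∀ e ∈ H, e.card = 3)
    (hfree : ¬ ContainsTraceK2t H t)
    (C : Finset (Finset V))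
    (hC : ∀ e, e ∈ C ↔ e ∈ H ∧ ∀ a ∈ e, ∀ b ∈ e, a ≠ b → δ < (codeg H a b : ℝ))
    (x y : V) (hxy : x ≠ y) :
    ((C.filter fun e => x ∈ e ∧ y ∈ e).card : ℝ) ≤
      (1 + 4 * ((1 + Real.log (δ + 1)) / (δ + 1))) * t - 1 := by
  classical
  by_contra hcon
  push_neg at hcon
  set F := C.filter fun e => x ∈ e ∧ y ∈ e with hF
  set m := F.card with hm
  have hδ1 : (0:ℝ) < δ + 1 := by linarith
  have hεpos : 0 < (1 + Real.log (δ + 1)) / (δ + 1) :=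
    div_pos (by nlinarith [Real.log_nonneg (by linarith : (1:ℝ) ≤ δ + 1)]) hδ1
  set d := Nat.floor δ with hd
  have hd14 : 14 ≤ d := Nat.le_floor (by exact_mod_cast hδ)
  have hdδ : (d:ℝ) ≤ δ := Nat.floor_le (by linarith)
  have hδd : δ < (d:ℝ) + 1 := Nat.lt_floor_add_one δ
  have hFspec : ∀ e ∈ F, ∃ u, u ≠ x ∧ u ≠ y ∧ (e.erase x).erase y = {u} ∧
      e = insert x (insert y {u}) := by
    intro e he
    have h1 := mem_filter.mp he
    have h2 := (hC e).mp h1.1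
    exact aux_third (h3 e h2.1) h1.2.1 h1.2.2 hxy
  set U := F.biUnion (fun e => (e.erase x).erase y) with hU
  have hUcard : U.card = m := by
    rw [hU, card_biUnion]
    · rw [hm, card_eq_sum_ones F]
      apply sum_congr rfl
      intro e he
      obtain ⟨u, _, _, hsu, _⟩ := hFspec e he
      rw [hsu, card_singleton]
    · intro e₁ h₁ e₂ h₂ hne
      obtain ⟨u₁, _, _, hs₁, hd₁⟩ := hFspec e₁ h₁
      obtain ⟨u₂, _, _, hs₂, hd₂⟩ := hFspec e₂ h₂
      show Disjoint ((e₁.erase x).erase y) ((e₂.erase x).erase y)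
      rw [hs₁, hs₂, disjoint_singleton]
      rintro rfl
      exact hne (hd₁.trans hd₂.symm)
  have hUspec : ∀ u ∈ U, u ≠ x ∧ u ≠ y ∧ insert x (insert y {u}) ∈ C := by
    intro u hu
    obtain ⟨e, he, hue⟩ := mem_biUnion.mp hu
    obtain ⟨u', hux, huy, hsu, hdef⟩ := hFspec e he
    rw [hsu, mem_singleton] at hue
    subst hue
    exact ⟨hux, huy, hdef ▸ (mem_filter.mp he).1⟩
  have hcodex : ∀ u ∈ U, d + 1 ≤ codeg H x u ∧ d + 1 ≤ codeg H y u := by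
    intro u hu
    obtain ⟨hux, huy, heC⟩ := hUspec u hu
    have h2 := ((hC _).mp heC).2
    have hxe : x ∈ insert x (insert y ({u} : Finset V)) := mem_insert_self _ _
    have hye : y ∈ insert x (insert y ({u} : Finset V)) := by simp
    have hue : u ∈ insert x (insert y ({u} : Finset V)) := by simp
    constructor
    · have hr : (d:ℝ) < codeg H x u :=
        lt_of_le_of_lt hdδ (h2 x hxe u hue (Ne.symm hux))
      have hn : d < codeg H x u := by exact_mod_cast hr
      omega
    · have hr : (d:ℝ) < codeg H y u :=
        lt_of_le_of_lt hdδ (h2 y hye u hue (Ne.symm huy))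
      have hn : d < codeg H y u := by exact_mod_cast hr
      omega
  set Wx : V → Finset V := fun u =>
    ((H.filter fun e => x ∈ e ∧ u ∈ e).biUnion fun e => (e.erase x).erase u).erase y with hWx
  set Wy : V → Finset V := fun u =>
    ((H.filter fun e => y ∈ e ∧ u ∈ e).biUnion fun e => (e.erase y).erase u).erase x with hWy
  have hWxmem : ∀ u ∈ U, ∀ w ∈ Wx u, w ≠ y ∧ w ≠ x ∧ w ≠ u ∧ insert x (insert u {w}) ∈ H := by
    intro u hu w hw
    exact auxW_mem h3 x u y w (Ne.symm (hUspec u hu).1) hw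
  have hWymem : ∀ u ∈ U, ∀ w ∈ Wy u, w ≠ x ∧ w ≠ y ∧ w ≠ u ∧ insert y (insert u {w}) ∈ H := by
    intro u hu w hw
    exact auxW_mem h3 y u x w (Ne.symm (hUspec u hu).2.1) hw
  have hWxcard : ∀ u ∈ U, d ≤ (Wx u).card ∧ u ∉ Wx u := by
    intro u hu
    constructor
    · have h1 : codeg H x u ≤ (Wx u).card + 1 :=
        auxW_card h3 x u y (Ne.symm (hUspec u hu).1)
      have h2 := (hcodex u hu).1
      omega
    · intro hmem
      exact (hWxmem u hu u hmem).2.2.1 rfl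
  have hWycard : ∀ u ∈ U, d ≤ (Wy u).card ∧ u ∉ Wy u := by
    intro u hu
    constructor
    · have h1 : codeg H y u ≤ (Wy u).card + 1 :=
        auxW_card h3 y u x (Ne.symm (hUspec u hu).2.1)
      have h2 := (hcodex u hu).2
      omega
    · intro hmem
      exact (hWymem u hu u hmem).2.2.1 rfl
  have hconstruct : ∀ D : Finset V, D ⊆ U → D.card = t →
      (∀ u ∈ D, (∃ w ∈ Wx u, w ∉ D) ∧ (∃ w ∈ Wy u, w ∉ D)) → False := by
    intro D hDU hDcard hgood
    apply hfree
    have hxD : x ∉ D := fun h => (hUspec x (hDU h)).1 rfl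
    have hyD : y ∉ D := fun h => (hUspec y (hDU h)).2.1 rfl
    have hedgeX : ∀ u ∈ D, ∃ e, e ∈ H ∧ e ∩ (insert x (insert y D)) = {x, u} := by
      intro u hu
      obtain ⟨w, hwW, hwD⟩ := (hgood u hu).1
      obtain ⟨hwy, hwx, hwu, heH⟩ := hWxmem u (hDU hu) w hwW
      refine ⟨insert x (insert u {w}), heH, ?_⟩
      ext z
      simp only [mem_inter, mem_insert, mem_singleton]
      constructor
      · rintro ⟨(rfl | rfl | rfl), h2⟩
        · exact Or.inl rfl
        · exact Or.inr rfl
        · rcases h2 with h | h | h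
          · exact absurd h hwx
          · exact absurd h hwy
          · exact absurd h hwD
      · rintro (rfl | rfl)
        · exact ⟨Or.inl rfl, Or.inl rfl⟩
        · exact ⟨Or.inr (Or.inl rfl), Or.inr (Or.inr hu)⟩
    have hedgeY : ∀ u ∈ D, ∃ e, e ∈ H ∧ e ∩ (insert x (insert y D)) = {y, u} := by
      intro u hu
      obtain ⟨w, hwW, hwD⟩ := (hgood u hu).2
      obtain ⟨hwx, hwy, hwu, heH⟩ := hWymem u (hDU hu) w hwW
      refine ⟨insert y (insert u {w}), heH, ?_⟩
      ext z
      simp only [mem_inter, mem_insert, mem_singleton]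
      constructor
      · rintro ⟨(rfl | rfl | rfl), h2⟩
        · exact Or.inl rfl
        · exact Or.inr rfl
        · rcases h2 with h | h | h
          · exact absurd h hwx
          · exact absurd h hwy
          · exact absurd h hwD
      · rintro (rfl | rfl)
        · exact ⟨Or.inl rfl, Or.inr (Or.inl rfl)⟩
        · exact ⟨Or.inr (Or.inl rfl), Or.inr (Or.inr hu)⟩
    have hfex : ∀ u : V, ∃ e : Finset V, u ∈ D →
        (e ∈ H ∧ e ∩ (insert x (insert y D)) = {x, u}) := by
      intro u
      by_cases hu : u ∈ D
      · obtain ⟨e, he⟩ := hedgeX u hu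
        exact ⟨e, fun _ => he⟩
      · exact ⟨∅, fun h => absurd h hu⟩
    choose f hf using hfex
    have hgex : ∀ u : V, ∃ e : Finset V, u ∈ D →
        (e ∈ H ∧ e ∩ (insert x (insert y D)) = {y, u}) := by
      intro u
      by_cases hu : u ∈ D
      · obtain ⟨e, he⟩ := hedgeY u hu
        exact ⟨e, fun _ => he⟩
      · exact ⟨∅, fun h => absurd h hu⟩
    choose g hg using hgex
    exact ⟨x, y, D, f, g, hxy, hxD, hyD, hDcard, fun u hu =>
      ⟨(hf u hu).1, (hg u hu).1, (hf u hu).2, (hg u hu).2⟩⟩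
  rcases le_or_gt t d with htd | hdt
  · -- case t ≤ d : no bad vertices at all
    have hmt : t ≤ m := by
      have h1 : (t:ℝ) - 1 < (m:ℝ) := by
        nlinarith [hcon, mul_nonneg hεpos.le (Nat.cast_nonneg t : (0:ℝ) ≤ t)]
      have h2 : (t:ℝ) < (m:ℝ) + 1 := by linarith
      have h3 : t < m + 1 := by exact_mod_cast h2
      omega
    obtain ⟨D, hDU, hDcard⟩ := exists_subset_card_eq (s := U) (n := t) (hUcard ▸ hmt)
    apply hconstruct D hDU hDcard
    intro u hu
    constructor
    · by_contra hcontra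
      push_neg at hcontra
      have hsub : Wx u ⊆ D.erase u := fun w hw =>
        mem_erase.mpr ⟨(hWxmem u (hDU hu) w hw).2.2.1, hcontra w hw⟩
      have h1 := card_le_card hsub
      rw [card_erase_of_mem hu, hDcard] at h1
      have h2 := (hWxcard u (hDU hu)).1
      omega
    · by_contra hcontra
      push_neg at hcontra
      have hsub : Wy u ⊆ D.erase u := fun w hw =>
        mem_erase.mpr ⟨(hWymem u (hDU hu) w hw).2.2.1, hcontra w hw⟩
      have h1 := card_le_card hsub
      rw [card_erase_of_mem hu, hDcard] at h1
      have h2 := (hWycard u (hDU hu)).1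
      omega
  · -- case d < t : counting argument
    set k := ⌈((1 + Real.log (δ + 1)) / (δ + 1)) * t⌉₊ with hk
    set s := t + k with hs
    have h_td : (d:ℝ) + 1 ≤ (t:ℝ) := by exact_mod_cast Nat.succ_le_of_lt hdt
    have h_k1 : ((1 + Real.log (δ + 1)) / (δ + 1)) * t ≤ (k:ℝ) := Nat.le_ceil _
    have h_k2 : (k:ℝ) ≤ ((1 + Real.log (δ + 1)) / (δ + 1)) * t + 1 := by
      have h0 : (0:ℝ) ≤ ((1 + Real.log (δ + 1)) / (δ + 1)) * t :=
        mul_nonneg hεpos.le (Nat.cast_nonneg t)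
      exact (Nat.ceil_lt_add_one h0).le
    have h_s : (s:ℝ) = (t:ℝ) + (k:ℝ) := by rw [hs]; push_cast; ring
    have hana := aux_analytic δ (Real.log (δ+1)) ((1 + Real.log (δ + 1)) / (δ + 1))
      t s m k d hδ rfl rfl hdδ hδd.le h_td h_k1 h_k2 h_s hcon.le
    obtain ⟨hsmR, hineqR⟩ := hana
    have hsm : s ≤ m := by exact_mod_cast hsmR
    set pow := U.powersetCard s with hpow
    have hpowcard : pow.card = m.choose s := by rw [hpow, card_powersetCard, hUcard]
    have hMainCount : ∀ W : V → Finset V, (∀ u ∈ U, d ≤ (W u).card ∧ u ∉ W u) →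
        (∑ D ∈ pow, (D.filter fun u => W u ⊆ D).card)
          ≤ m * (m - (d+1)).choose (s - (d+1)) := by
      intro W hW
      have step1 : ∀ D ∈ pow, (D.filter fun u => W u ⊆ D).card
          = ∑ u ∈ U, (if u ∈ D ∧ W u ⊆ D then 1 else 0) := by
        intro D hD
        have hDU : D ⊆ U := (mem_powersetCard.mp hD).1
        calc (D.filter fun u => W u ⊆ D).card
            = ∑ u ∈ D, (if W u ⊆ D then 1 else 0) := card_filter _ _
          _ = ∑ u ∈ U ∩ D, (if W u ⊆ D then 1 else 0) := by rw [inter_eq_right.mpr hDU]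
          _ = ∑ u ∈ U, (if u ∈ D then (if W u ⊆ D then 1 else 0) else 0) :=
              (sum_ite_mem U D _).symm
          _ = ∑ u ∈ U, (if u ∈ D ∧ W u ⊆ D then 1 else 0) := by
              apply sum_congr rfl
              intro u _
              by_cases h1 : u ∈ D <;> by_cases h2 : W u ⊆ D <;> simp [h1, h2]
      rw [sum_congr rfl step1, Finset.sum_comm]
      have step2 : ∀ u ∈ U, (∑ D ∈ pow, if u ∈ D ∧ W u ⊆ D then 1 else 0)
          ≤ (m - (d+1)).choose (s - (d+1)) := by
        intro u hu
        rw [← card_filter]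
        obtain ⟨hWc, hWu⟩ := hW u hu
        obtain ⟨W', hW's, hW'c⟩ := exists_subset_card_eq hWc
        have hA : (insert u W').card = d + 1 := by
          rw [card_insert_of_notMem (fun h => hWu (hW's h)), hW'c]
        have hsub2 : pow.filter (fun D => u ∈ D ∧ W u ⊆ D)
            ⊆ pow.filter (fun D => insert u W' ⊆ D) := by
          intro D hD
          have h := mem_filter.mp hD
          exact mem_filter.mpr ⟨h.1, insert_subset h.2.1 (hW's.trans h.2.2)⟩
        refine le_trans (card_le_card hsub2) ?_
        by_cases hAU : insert u W' ⊆ U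
        · have hmap : ∀ D ∈ pow.filter (fun D => insert u W' ⊆ D),
              D \ (insert u W') ∈ (U \ (insert u W')).powersetCard (s - (d+1)) := by
            intro D hD
            obtain ⟨hDpow, hAD⟩ := mem_filter.mp hD
            obtain ⟨hDU, hDc⟩ := mem_powersetCard.mp hDpow
            rw [mem_powersetCard]
            constructor
            · exact sdiff_subset_sdiff hDU (Finset.Subset.refl _)
            · rw [card_sdiff_of_subset hAD, hDc, hA]
          have hinj : Set.InjOn (fun D => D \ (insert u W'))
              (pow.filter (fun D => insert u W' ⊆ D)) := by
            intro D1 h1 D2 h2 h12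
            have hA1 := (mem_filter.mp (mem_coe.mp h1)).2
            have hA2 := (mem_filter.mp (mem_coe.mp h2)).2
            have h12' : D1 \ (insert u W') = D2 \ (insert u W') := h12
            calc D1 = D1 \ (insert u W') ∪ (insert u W') :=
                  (sdiff_union_of_subset hA1).symm
              _ = D2 \ (insert u W') ∪ (insert u W') := by rw [h12']
              _ = D2 := sdiff_union_of_subset hA2
          refine le_trans (card_le_card_of_injOn _ hmap hinj) ?_
          rw [card_powersetCard, card_sdiff_of_subset hAU, hUcard, hA]
        · have hempty : pow.filter (fun D => insert u W' ⊆ D) = ∅ := by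
            rw [filter_eq_empty_iff]
            intro D hD hAD
            exact hAU (hAD.trans (mem_powersetCard.mp hD).1)
          rw [hempty]
          simp
      calc ∑ u ∈ U, (∑ D ∈ pow, if u ∈ D ∧ W u ⊆ D then 1 else 0)
          ≤ ∑ u ∈ U, (m - (d+1)).choose (s - (d+1)) := sum_le_sum step2
        _ = m * (m - (d+1)).choose (s - (d+1)) := by rw [sum_const, smul_eq_mul, hUcard]
    have hdt1 : d + 1 ≤ s := by omega
    have hd1m : d + 1 ≤ m := le_trans hdt1 hsm
    have hmpos : 0 < m := by omega
    have h6 : 2 * m * s.choose (d+1) ≤ k * m.choose (d+1) := by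
      have hmR : (0:ℝ) < (m:ℝ) := by exact_mod_cast hmpos
      have hmRpow : (0:ℝ) < (m:ℝ)^(d+1) := by positivity
      have hcpR : (s.choose (d+1) : ℝ) * (m:ℝ)^(d+1) ≤ (m.choose (d+1) : ℝ) * (s:ℝ)^(d+1) := by
        exact_mod_cast aux_choose_pow (d+1) s m hsm
      have hchain : (2 * (m:ℝ) * (s.choose (d+1):ℝ)) * (m:ℝ)^(d+1)
          ≤ ((k:ℝ) * (m.choose (d+1):ℝ)) * (m:ℝ)^(d+1) := by
        calc (2 * (m:ℝ) * (s.choose (d+1):ℝ)) * (m:ℝ)^(d+1)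
            = 2*(m:ℝ) * ((s.choose (d+1):ℝ) * (m:ℝ)^(d+1)) := by ring
          _ ≤ 2*(m:ℝ) * ((m.choose (d+1):ℝ) * (s:ℝ)^(d+1)) := by
              apply mul_le_mul_of_nonneg_left hcpR (by positivity)
          _ = (m.choose (d+1):ℝ) * (2*(m:ℝ)*(s:ℝ)^(d+1)) := by ring
          _ ≤ (m.choose (d+1):ℝ) * ((k:ℝ)*(m:ℝ)^(d+1)) := by
              apply mul_le_mul_of_nonneg_left hineqR (by positivity)
          _ = ((k:ℝ) * (m.choose (d+1):ℝ)) * (m:ℝ)^(d+1) := by ring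
      have h7 : (2 * (m:ℝ) * (s.choose (d+1):ℝ)) ≤ (k:ℝ) * (m.choose (d+1):ℝ) :=
        le_of_mul_le_mul_right hchain hmRpow
      exact_mod_cast h7
    have hkey : 2 * (m * (m - (d+1)).choose (s - (d+1))) ≤ k * m.choose s := by
      apply Nat.le_of_mul_le_mul_right _ (Nat.choose_pos hd1m)
      calc 2 * (m * (m - (d+1)).choose (s - (d+1))) * m.choose (d+1)
          = (m.choose (d+1) * ((m - (d+1)).choose (s - (d+1)))) * (2 * m) := by ring
        _ = (m.choose s * s.choose (d+1)) * (2*m) := by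
            rw [← aux_choose_id (d+1) s m hdt1 hsm]
        _ = (2 * m * s.choose (d+1)) * m.choose s := by ring
        _ ≤ (k * m.choose (d+1)) * m.choose s := Nat.mul_le_mul_right _ h6
        _ = k * m.choose s * m.choose (d+1) := by ring
    have hexD : ∃ D ∈ pow, (D.filter fun u => Wx u ⊆ D ∨ Wy u ⊆ D).card ≤ k := by
      by_contra hno
      push_neg at hno
      have hBadSum : ∑ D ∈ pow, (D.filter fun u => Wx u ⊆ D ∨ Wy u ⊆ D).card
          ≤ 2 * (m * (m - (d+1)).choose (s - (d+1))) := by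
        have h1 : ∀ D ∈ pow, (D.filter fun u => Wx u ⊆ D ∨ Wy u ⊆ D).card
            ≤ (D.filter fun u => Wx u ⊆ D).card + (D.filter fun u => Wy u ⊆ D).card := by
          intro D _
          rw [filter_or]
          exact card_union_le _ _
        calc ∑ D ∈ pow, (D.filter fun u => Wx u ⊆ D ∨ Wy u ⊆ D).card
            ≤ ∑ D ∈ pow, ((D.filter fun u => Wx u ⊆ D).card
                + (D.filter fun u => Wy u ⊆ D).card) := sum_le_sum h1
          _ = (∑ D ∈ pow, (D.filter fun u => Wx u ⊆ D).card)
              + (∑ D ∈ pow, (D.filter fun u => Wy u ⊆ D).card) := sum_add_distrib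
          _ ≤ m * (m - (d+1)).choose (s - (d+1)) + m * (m - (d+1)).choose (s - (d+1)) :=
              add_le_add (hMainCount Wx hWxcard) (hMainCount Wy hWycard)
          _ = 2 * (m * (m - (d+1)).choose (s - (d+1))) := by ring
      have hlb : (k+1) * pow.card ≤ ∑ D ∈ pow, (D.filter fun u => Wx u ⊆ D ∨ Wy u ⊆ D).card := by
        calc (k+1) * pow.card = ∑ _D ∈ pow, (k+1) := by
              rw [sum_const, smul_eq_mul, mul_comm]
          _ ≤ ∑ D ∈ pow, (D.filter fun u => Wx u ⊆ D ∨ Wy u ⊆ D).card :=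
              sum_le_sum fun D hD => hno D hD
      have hfin := le_trans hlb (le_trans hBadSum hkey)
      rw [hpowcard] at hfin
      have hCpos : 0 < m.choose s := Nat.choose_pos hsm
      nlinarith [hfin, hCpos]
    obtain ⟨D, hDpow, hDbad⟩ := hexD
    obtain ⟨hDU, hDcard⟩ := mem_powersetCard.mp hDpow
    have hBsub : (D.filter fun u => Wx u ⊆ D ∨ Wy u ⊆ D) ⊆ D := filter_subset _ _
    have hGcard : t ≤ (D \ (D.filter fun u => Wx u ⊆ D ∨ Wy u ⊆ D)).card := by
      rw [card_sdiff_of_subset hBsub, hDcard]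
      omega
    obtain ⟨D', hD'G, hD'card⟩ := exists_subset_card_eq hGcard
    have hD'D : D' ⊆ D := fun u hu => (mem_sdiff.mp (hD'G hu)).1
    apply hconstruct D' (fun u hu => hDU (hD'D hu)) hD'card
    intro u hu
    have hu1 := mem_sdiff.mp (hD'G hu)
    have hnb : ¬(Wx u ⊆ D ∨ Wy u ⊆ D) := fun h => hu1.2 (mem_filter.mpr ⟨hu1.1, h⟩)
    push_neg at hnb
    constructor
    · obtain ⟨w, hw1, hw2⟩ := not_subset.mp hnb.1
      exact ⟨w, hw1, fun hwD' => hw2 (hD'D hwD')⟩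
    · obtain ⟨w, hw1, hw2⟩ := not_subset.mp hnb.2
      exact ⟨w, hw1, fun hwD' => hw2 (hD'D hwD')⟩
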